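/- arXiv:1905.05528 — 2 statements merged into one kernel-verified Lean document; each statement's English description precedes it below -/
import Mathlib

section
/- Let V be a finite type and G : Finset V → V → ℝ. For a duplicate-free list [v₁, …, v_s] of elements of V, define the telescoping sum of G along the list as Σ_{i=1}^{s} G({v₁, …, v_{i−1}}, v_i). If G is unordered, i.e. for any two duplicate-free lists whose underlying finsets are equal the telescoping sums of G along them coincide, then there exists a function f : Finset V → ℝ with f(∅) = 0 such that for every X ⊆ V and every v ∉ X, f(X ∪ {v}) = f(X) + G(X, v). -/
/-- The telescoping sum of `G` along a list `[v₁, …, v_s]`: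
`∑ i, G {v₁, …, v_{i-1}} vᵢ`. -/
noncomputable def teleSum {V : Type*} [DecidableEq V]
    (G : Finset V → V → ℝ) (l : List V) : ℝ :=
  ∑ i : Fin l.length, G ((l.take i).toFinset) (l.get i)

lemma teleSum_cons {V : Type*} [DecidableEq V]
    (G : Finset V → V → ℝ) (a : V) (l : List V) :
    teleSum G (a :: l) = G ∅ a + teleSum (fun S w => G (insert a S) w) l := by
  unfold teleSum
  show (∑ i : Fin (l.length+1), G ((a::l).take i.val).toFinset ((a::l).get i)) = _
  rw [Fin.sum_univ_succ]
  simp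

lemma teleSum_append {V : Type*} [DecidableEq V]
    (G : Finset V → V → ℝ) (l : List V) (v : V) :
    teleSum G (l ++ [v]) = teleSum G l + G l.toFinset v := by
  induction l generalizing G with
  | nil => simp [teleSum]
  | cons a l ih =>
      rw [List.cons_append, teleSum_cons, ih, teleSum_cons]
      simp [add_assoc]

/-- if `G` is unordered (telescoping sums along duplicate-free lists only
depend on the underlying finset), then there exists an accumulation function `f` with
`f ∅ = 0` and `f (X ∪ {v}) = f X + G X v` for `v ∉ X`. -/
theorem stmt1 {V : Type*} [Fintype V] [DecidableEq V]
    (G : Finset V → V → ℝ)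
    (hG_unordered : ∀ l₁ l₂ : List V, l₁.Nodup → l₂.Nodup →
      l₁.toFinset = l₂.toFinset → teleSum G l₁ = teleSum G l₂) :
    ∃ f : Finset V → ℝ, f ∅ = 0 ∧
      ∀ (X : Finset V) (v : V), v ∉ X → f (insert v X) = f X + G X v := by
  refine ⟨fun X => teleSum G X.toList, by show teleSum G (∅:Finset V).toList = 0; rw [Finset.toList_empty]; simp [teleSum], ?_⟩
  intro X v hv
  have h1 : (insert v X).toList.Nodup := Finset.nodup_toList _
  have h2 : (X.toList ++ [v]).Nodup := by
    simp [List.nodup_append, Finset.nodup_toList, Finset.mem_toList, hv]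
  have h3 : (insert v X).toList.toFinset = (X.toList ++ [v]).toFinset := by
    simp [Finset.toList_toFinset, Finset.insert_eq, Finset.union_comm, -Finset.union_singleton]
  simp only []
  rw [hG_unordered _ _ h1 h2 h3, teleSum_append, Finset.toList_toFinset]
end

section
/- Let B > 0 and let δ₂, …, δ_{t+1} be real numbers with 0 ≤ δ_k ≤ B for all k and Σ_{k=2}^{t+1} δ_k ≥ B, and let F ≥ 0 be a real number. Then 1 − ∏_{k=2}^{t+1} (1 − δ_k / B) > 0 and F / (1 − e^{−1}) ≥ F / (1 − ∏_{k=2}^{t+1} (1 − δ_k / B)). -/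
/-- under the GCB-increment hypotheses, the denominator
`1 - ∏ (1 - δₖ/B)` is positive and `F/(1 - e⁻¹) ≥ F/(1 - ∏ (1 - δₖ/B))`. -/
theorem stmt9 (B : ℝ) (hB : 0 < B) (t : ℕ) (δ : ℕ → ℝ)
    (hδ0 : ∀ k ∈ Finset.Icc 2 (t + 1), 0 ≤ δ k)
    (hδB : ∀ k ∈ Finset.Icc 2 (t + 1), δ k ≤ B)
    (hsum : B ≤ ∑ k ∈ Finset.Icc 2 (t + 1), δ k)
    (F : ℝ) (hF : 0 ≤ F) :
    0 < 1 - ∏ k ∈ Finset.Icc 2 (t + 1), (1 - δ k / B) ∧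
    F / (1 - ∏ k ∈ Finset.Icc 2 (t + 1), (1 - δ k / B)) ≤
      F / (1 - Real.exp (-1)) := by
  have hprod : ∏ k ∈ Finset.Icc 2 (t + 1), (1 - δ k / B) ≤ Real.exp (-1) := by
    have h1 : ∏ k ∈ Finset.Icc 2 (t + 1), (1 - δ k / B) ≤
        ∏ k ∈ Finset.Icc 2 (t + 1), Real.exp (-(δ k / B)) := by
      apply Finset.prod_le_prod
      · intro k hk
        have := hδB k hk
        have : δ k / B ≤ 1 := (div_le_one hB).mpr this
        linarith
      · intro k hk
        have := Real.add_one_le_exp (-(δ k / B))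
        linarith
    have h2 : ∏ k ∈ Finset.Icc 2 (t + 1), Real.exp (-(δ k / B)) =
        Real.exp (∑ k ∈ Finset.Icc 2 (t + 1), -(δ k / B)) := (Real.exp_sum _ _).symm
    have h3 : Real.exp (∑ k ∈ Finset.Icc 2 (t + 1), -(δ k / B)) ≤ Real.exp (-1) := by
      apply Real.exp_le_exp.mpr
      have : (1 : ℝ) ≤ ∑ k ∈ Finset.Icc 2 (t + 1), δ k / B := by
        rw [← Finset.sum_div]
        exact (one_le_div hB).mpr hsum
      rw [Finset.sum_neg_distrib]
      linarith
    calc _ ≤ _ := h1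
      _ = _ := h2
      _ ≤ _ := h3
  have hexp : Real.exp (-1) < 1 := by
    have := Real.exp_lt_one_iff.mpr (by norm_num : (-1 : ℝ) < 0)
    exact this
  have hpos : 0 < 1 - ∏ k ∈ Finset.Icc 2 (t + 1), (1 - δ k / B) := by linarith
  refine ⟨hpos, ?_⟩
  apply div_le_div_of_nonneg_left hF (by linarith)
  linarith
end
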